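/- arXiv:math/0305237 — 2 statements merged into one kernel-verified Lean document; each statement's English description precedes it below -/
import Mathlib

section
/- Let n > 1, let U ⊂ ℝⁿ be a nonempty open O(n)-invariant set, I = {|x|² : x ∈ U}, and let θ : I → (0,∞) be of class C² satisfying the differential equation 2 s θ(s) θ''(s) = (1 − θ'(s)) (s θ'(s)² + θ(s)) for all s ∈ I, together with θ'(s) < 1 for all s ∈ I. Set ρ(x+iy) = |y|² − θ(|x|²) and Σ = {x+iy : x ∈ U, |y|² = θ(|x|²)}. Then L_ρ(p;v) ≥ 0 for every p ∈ Σ and every v ∈ T_p^ℂΣ; moreover, L_ρ(p;v) > 0 for every nonzero v ∈ T_p^ℂΣ at every point p = x+iy ∈ Σ with ⟨x,y⟩ ≠ 0, while at every point p = x+iy ∈ Σ with ⟨x,y⟩ = 0 there exists a nonzero v ∈ T_p^ℂΣ with L_ρ(p;v) = 0. -/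
open Complex Set

/-- The Levi form of a `C²` function `ρ` at `p` in direction `v`:
`4 L_ρ(p;v) = H_p(v,v) + H_p(iv,iv)` where `H_p` is the second real Fréchet derivative. -/
noncomputable def leviForm {E : Type*} [NormedAddCommGroup E] [NormedSpace ℂ E]
    (ρ : E → ℝ) (p v : E) : ℝ :=
  (iteratedFDeriv ℝ 2 ρ p ![v, v]
    + iteratedFDeriv ℝ 2 ρ p ![Complex.I • v, Complex.I • v]) / 4

/-- The complex tangent space `T_p^ℂΣ = {v : dρ_p(v) = 0 and dρ_p(iv) = 0}`. -/
def complexTangent {E : Type*} [NormedAddCommGroup E] [NormedSpace ℂ E]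
    (ρ : E → ℝ) (p : E) : Set E :=
  {v | fderiv ℝ ρ p v = 0 ∧ fderiv ℝ ρ p (Complex.I • v) = 0}

/-- `ρ(x+iy) = |y|² - θ(|x|²)`. -/
noncomputable def rho (n : ℕ) (θ : ℝ → ℝ) : (Fin n → ℂ) → ℝ :=
  fun z => (∑ j, (z j).im ^ 2) - θ (∑ j, (z j).re ^ 2)

/-- The hypersurface `Σ = {x+iy : x ∈ U, |y|² = θ(|x|²)}`. -/
def SigmaSet (n : ℕ) (U : Set (Fin n → ℝ)) (θ : ℝ → ℝ) : Set (Fin n → ℂ) :=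
  {z | (fun j => (z j).re) ∈ U ∧ (∑ j, (z j).im ^ 2) = θ (∑ j, (z j).re ^ 2)}

namespace LeviAux
variable {n : ℕ}

noncomputable def Lre (j : Fin n) : (Fin n → ℂ) →L[ℝ] ℝ :=
  Complex.reCLM.comp (ContinuousLinearMap.proj j)

noncomputable def Lim (j : Fin n) : (Fin n → ℂ) →L[ℝ] ℝ :=
  Complex.imCLM.comp (ContinuousLinearMap.proj j)

@[simp] lemma Lre_apply (j : Fin n) (z : Fin n → ℂ) : Lre j z = (z j).re := rfl
@[simp] lemma Lim_apply (j : Fin n) (z : Fin n → ℂ) : Lim j z = (z j).im := rfl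

noncomputable def Qre (n : ℕ) : (Fin n → ℂ) →L[ℝ] ((Fin n → ℂ) →L[ℝ] ℝ) :=
  ∑ j, (2:ℝ) • ((Lre j).smulRight (Lre j))

noncomputable def Qim (n : ℕ) : (Fin n → ℂ) →L[ℝ] ((Fin n → ℂ) →L[ℝ] ℝ) :=
  ∑ j, (2:ℝ) • ((Lim j).smulRight (Lim j))

@[simp] lemma Qre_apply (z v : Fin n → ℂ) :
    Qre n z v = 2 * ∑ j, (z j).re * (v j).re := by
  simp [Qre, ContinuousLinearMap.sum_apply, Finset.mul_sum]

@[simp] lemma Qim_apply (z v : Fin n → ℂ) :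
    Qim n z v = 2 * ∑ j, (z j).im * (v j).im := by
  simp [Qim, ContinuousLinearMap.sum_apply, Finset.mul_sum]

lemma hasFDerivAt_S (p : Fin n → ℂ) :
    HasFDerivAt (fun z : Fin n → ℂ => ∑ j, (z j).re ^ 2) (Qre n p) p := by
  have h := HasFDerivAt.fun_sum
    (fun (j : Fin n) (_ : j ∈ Finset.univ) =>
      ((Lre j).hasFDerivAt (x := p)).mul ((Lre j).hasFDerivAt (x := p)))
  refine (h.congr_of_eventuallyEq (Filter.Eventually.of_forall fun z => ?_)).congr_fderiv ?_
  · simp [sq]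
  · ext v
    simp [Qre, ContinuousLinearMap.sum_apply, two_smul]


lemma hasFDerivAt_N (p : Fin n → ℂ) :
    HasFDerivAt (fun z : Fin n → ℂ => ∑ j, (z j).im ^ 2) (Qim n p) p := by
  have h := HasFDerivAt.fun_sum
    (fun (j : Fin n) (_ : j ∈ Finset.univ) =>
      ((Lim j).hasFDerivAt (x := p)).mul ((Lim j).hasFDerivAt (x := p)))
  refine (h.congr_of_eventuallyEq (Filter.Eventually.of_forall fun z => ?_)).congr_fderiv ?_
  · simp [sq]
  · ext v
    simp [Qim, ContinuousLinearMap.sum_apply, two_smul]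




variable {θ : ℝ → ℝ} {V : Set ℝ}

lemma thetaC1 (hθ : ContDiffOn ℝ 2 θ V) (hV : IsOpen V) {s₀ : ℝ} (hs : s₀ ∈ V) :
    HasDerivAt θ (deriv θ s₀) s₀ :=
  (((hθ.differentiableOn (by norm_num)) s₀ hs).differentiableAt (hV.mem_nhds hs)).hasDerivAt

lemma thetaC2 (hθ : ContDiffOn ℝ 2 θ V) (hV : IsOpen V) {s₀ : ℝ} (hs : s₀ ∈ V) :
    HasDerivAt (deriv θ) (deriv (deriv θ) s₀) s₀ := by
  have h1 : ContDiffOn ℝ 1 (deriv θ) V := hθ.deriv_of_isOpen hV (by norm_num)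
  exact (((h1.differentiableOn one_ne_zero) s₀ hs).differentiableAt (hV.mem_nhds hs)).hasDerivAt

lemma hasFDerivAt_rho (hθ : ContDiffOn ℝ 2 θ V) (hV : IsOpen V) {p : Fin n → ℂ}
    (hp : (∑ j, (p j).re ^ 2) ∈ V) :
    HasFDerivAt (rho n θ)
      (Qim n p - (deriv θ (∑ j, (p j).re ^ 2)) • Qre n p) p := by
  have h2 := (thetaC1 hθ hV hp).comp_hasFDerivAt p (hasFDerivAt_S p)
  exact (hasFDerivAt_N p).sub h2

lemma fderiv_rho (hθ : ContDiffOn ℝ 2 θ V) (hV : IsOpen V) {p : Fin n → ℂ}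
    (hp : (∑ j, (p j).re ^ 2) ∈ V) :
    fderiv ℝ (rho n θ) p = Qim n p - (deriv θ (∑ j, (p j).re ^ 2)) • Qre n p :=
  (hasFDerivAt_rho hθ hV hp).fderiv

lemma continuous_S : Continuous (fun z : Fin n → ℂ => ∑ j, (z j).re ^ 2) := by
  exact continuous_finset_sum _ fun j _ => (Complex.continuous_re.comp (continuous_apply j)).pow 2

lemma fderiv2_rho (hθ : ContDiffOn ℝ 2 θ V) (hV : IsOpen V) {p : Fin n → ℂ}
    (hp : (∑ j, (p j).re ^ 2) ∈ V) :
    fderiv ℝ (fderiv ℝ (rho n θ)) p =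
      Qim n - (deriv θ (∑ j, (p j).re ^ 2) • Qre n
        + ((deriv (deriv θ) (∑ j, (p j).re ^ 2)) • (Qre n p)).smulRight (Qre n p)) := by
  have hev : fderiv ℝ (rho n θ) =ᶠ[nhds p]
      (fun z => Qim n z - (deriv θ (∑ j, (z j).re ^ 2)) • Qre n z) := by
    filter_upwards [continuous_S.isOpen_preimage V hV |>.mem_nhds hp] with z hz
    exact fderiv_rho hθ hV hz
  rw [hev.fderiv_eq]
  have hc : HasFDerivAt (fun z : Fin n → ℂ => deriv θ (∑ j, (z j).re ^ 2))
      ((deriv (deriv θ) (∑ j, (p j).re ^ 2)) • Qre n p) p := by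
    have := (thetaC2 hθ hV hp).comp_hasFDerivAt p (hasFDerivAt_S p); exact this
  have hf : HasFDerivAt (fun z => Qre n z) (Qre n) p := (Qre n).hasFDerivAt
  have := ((Qim n).hasFDerivAt (x := p)).sub (hc.smul hf)
  exact this.fderiv

lemma fderiv2_apply (hθ : ContDiffOn ℝ 2 θ V) (hV : IsOpen V) {p : Fin n → ℂ}
    (hp : (∑ j, (p j).re ^ 2) ∈ V) (v w : Fin n → ℂ) :
    fderiv ℝ (fderiv ℝ (rho n θ)) p v w =
      2 * ∑ j, (v j).im * (w j).im
        - deriv θ (∑ j, (p j).re ^ 2) * (2 * ∑ j, (v j).re * (w j).re)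
        - deriv (deriv θ) (∑ j, (p j).re ^ 2) *
            ((2 * ∑ j, (p j).re * (v j).re) * (2 * ∑ j, (p j).re * (w j).re)) := by
  rw [fderiv2_rho hθ hV hp]
  simp only [ContinuousLinearMap.sub_apply, ContinuousLinearMap.add_apply,
    ContinuousLinearMap.coe_smul', Pi.smul_apply, ContinuousLinearMap.smulRight_apply,
    ContinuousLinearMap.smul_apply, smul_eq_mul, Qim_apply, Qre_apply]
  ring

lemma tangent_rho (hθ : ContDiffOn ℝ 2 θ V) (hV : IsOpen V) {p : Fin n → ℂ}
    (hp : (∑ j, (p j).re ^ 2) ∈ V) (v : Fin n → ℂ) :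
    fderiv ℝ (rho n θ) p v =
      2 * ∑ j, (p j).im * (v j).im
        - deriv θ (∑ j, (p j).re ^ 2) * (2 * ∑ j, (p j).re * (v j).re) := by
  rw [fderiv_rho hθ hV hp]
  simp only [ContinuousLinearMap.sub_apply, ContinuousLinearMap.coe_smul', Pi.smul_apply,
    smul_eq_mul, Qim_apply, Qre_apply]


lemma levi_rho (hθ : ContDiffOn ℝ 2 θ V) (hV : IsOpen V) {p : Fin n → ℂ}
    (hp : (∑ j, (p j).re ^ 2) ∈ V) (v : Fin n → ℂ) :
    leviForm (rho n θ) p v =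
      (1 - deriv θ (∑ j, (p j).re ^ 2)) * ((∑ j, (v j).re ^ 2) + (∑ j, (v j).im ^ 2)) / 2
        - deriv (deriv θ) (∑ j, (p j).re ^ 2) *
          ((∑ j, (p j).re * (v j).re) ^ 2 + (∑ j, (p j).re * (v j).im) ^ 2) := by
  have h1 := fderiv2_apply hθ hV hp v v
  have h2 := fderiv2_apply hθ hV hp (Complex.I • v) (Complex.I • v)
  have hre : ∀ j : Fin n, ((Complex.I • v) j).re = -(v j).im := by
    intro j
    simp [Pi.smul_apply, smul_eq_mul, Complex.mul_re]
  have him : ∀ j : Fin n, ((Complex.I • v) j).im = (v j).re := by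
    intro j
    simp [Pi.smul_apply, smul_eq_mul, Complex.mul_im]
  rw [leviForm, iteratedFDeriv_two_apply, iteratedFDeriv_two_apply]
  simp only [Matrix.cons_val_zero, Matrix.cons_val_one, Matrix.head_cons]
  rw [h1, h2]
  simp only [hre, him, mul_neg, neg_mul, neg_neg, Finset.sum_neg_distrib]
  have e1 : (∑ j, (v j).re * (v j).re) = ∑ j, (v j).re ^ 2 := by
    refine Finset.sum_congr rfl fun j _ => (sq _).symm
  have e2 : (∑ j, (v j).im * (v j).im) = ∑ j, (v j).im ^ 2 := by
    refine Finset.sum_congr rfl fun j _ => (sq _).symm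
  rw [e1, e2]
  ring

lemma sum_expand (x y u : Fin n → ℝ) (c₁ c₂ c₃ : ℝ) :
    ∑ j, (c₁ * u j + c₂ * x j + c₃ * y j) ^ 2
      = c₁ ^ 2 * (∑ j, u j ^ 2) + c₂ ^ 2 * (∑ j, x j ^ 2) + c₃ ^ 2 * (∑ j, y j ^ 2)
        + 2 * c₁ * c₂ * (∑ j, x j * u j) + 2 * c₁ * c₃ * (∑ j, y j * u j)
        + 2 * c₂ * c₃ * (∑ j, x j * y j) := by
  have h : ∀ j : Fin n, (c₁ * u j + c₂ * x j + c₃ * y j) ^ 2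
      = c₁ ^ 2 * u j ^ 2 + c₂ ^ 2 * x j ^ 2 + c₃ ^ 2 * y j ^ 2
        + 2 * c₁ * c₂ * (x j * u j) + 2 * c₁ * c₃ * (y j * u j)
        + 2 * c₂ * c₃ * (x j * y j) := fun j => by ring
  simp_rw [h, Finset.sum_add_distrib, ← Finset.mul_sum]

lemma sum_comb (x y a : Fin n → ℝ) (c d : ℝ) :
    ∑ j, (c * x j + d * y j) * a j = c * (∑ j, x j * a j) + d * (∑ j, y j * a j) := by
  have h : ∀ j : Fin n, (c * x j + d * y j) * a j = c * (x j * a j) + d * (y j * a j) :=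
    fun j => by ring
  simp_rw [h, Finset.sum_add_distrib, ← Finset.mul_sum]

lemma sum_expand2 (x y : Fin n → ℝ) (c d : ℝ) :
    ∑ j, (c * x j + d * y j) ^ 2
      = c ^ 2 * (∑ j, x j ^ 2) + d ^ 2 * (∑ j, y j ^ 2) + 2 * c * d * (∑ j, x j * y j) := by
  have h : ∀ j : Fin n, (c * x j + d * y j) ^ 2
      = c ^ 2 * x j ^ 2 + d ^ 2 * y j ^ 2 + 2 * c * d * (x j * y j) := fun j => by ring
  simp_rw [h, Finset.sum_add_distrib, ← Finset.mul_sum]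

lemma cs_combo (x y a : Fin n → ℝ) (c d : ℝ) :
    (c * (∑ j, x j * a j) + d * (∑ j, y j * a j)) ^ 2
      ≤ (c ^ 2 * (∑ j, x j ^ 2) + d ^ 2 * (∑ j, y j ^ 2) + 2 * c * d * (∑ j, x j * y j))
          * (∑ j, a j ^ 2) := by
  have h := Finset.sum_mul_sq_le_sq_mul_sq Finset.univ (fun j => c * x j + d * y j) a
  beta_reduce at h
  rwa [sum_comb, sum_expand2] at h

lemma cs_eq (x y a : Fin n → ℝ) (c d : ℝ)
    (h0 : c ^ 2 * (∑ j, x j ^ 2) + d ^ 2 * (∑ j, y j ^ 2) + 2 * c * d * (∑ j, x j * y j) = 0) :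
    c * (∑ j, x j * a j) + d * (∑ j, y j * a j) = 0 := by
  have h := cs_combo x y a c d
  rw [h0, zero_mul] at h
  exact pow_eq_zero_iff two_ne_zero |>.mp (le_antisymm h (sq_nonneg _))



set_option maxHeartbeats 2000000 in
lemma key_ineq (x y a b : Fin n → ℝ) (d1 : ℝ)
    (hs : 0 < ∑ j, x j ^ 2) (hw : 0 < ∑ j, y j ^ 2)
    (hβ : (∑ j, y j * a j) = -(d1 * ∑ j, x j * b j))
    (hδ : (∑ j, y j * b j) = d1 * ∑ j, x j * a j) :
    ((∑ j, y j ^ 2) + (∑ j, x j ^ 2) * d1 ^ 2) * ((∑ j, x j * a j) ^ 2 + (∑ j, x j * b j) ^ 2)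
      + (∑ j, x j * y j) ^ 2 * ((∑ j, a j ^ 2) + (∑ j, b j ^ 2))
      ≤ (∑ j, x j ^ 2) * (∑ j, y j ^ 2) * ((∑ j, a j ^ 2) + (∑ j, b j ^ 2)) := by
  have hCS : (∑ j, x j * y j) ^ 2 ≤ (∑ j, x j ^ 2) * (∑ j, y j ^ 2) :=
    Finset.sum_mul_sq_le_sq_mul_sq Finset.univ x y
  rcases eq_or_lt_of_le hCS with hD0 | hD
  · -- degenerate case : Cauchy-Schwarz equality
    have h0w : (∑ j, y j ^ 2) ^ 2 * (∑ j, x j ^ 2) + (-(∑ j, x j * y j)) ^ 2 * (∑ j, y j ^ 2)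
        + 2 * (∑ j, y j ^ 2) * (-(∑ j, x j * y j)) * (∑ j, x j * y j) = 0 := by
      linear_combination (-(∑ j, y j ^ 2)) * hD0
    have e1 := cs_eq x y a (∑ j, y j ^ 2) (-(∑ j, x j * y j)) h0w
    have e3 := cs_eq x y b (∑ j, y j ^ 2) (-(∑ j, x j * y j)) h0w
    have hkey : (∑ j, x j * a j) *
        ((∑ j, y j ^ 2) ^ 2 + (∑ j, x j * y j) ^ 2 * d1 ^ 2) = 0 := by
      linear_combination (∑ j, y j ^ 2) * e1 + (∑ j, y j ^ 2) * (∑ j, x j * y j) * hβ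
        - (∑ j, x j * y j) * d1 * e3 - (∑ j, x j * y j) ^ 2 * d1 * hδ
    have hal0 : (∑ j, x j * a j) = 0 := by
      rcases mul_eq_zero.mp hkey with h | h
      · exact h
      · exfalso; nlinarith [sq_nonneg (∑ j, x j * y j), sq_nonneg d1]
    have hkey2 : (∑ j, x j * b j) * (∑ j, y j ^ 2) = 0 := by
      linear_combination e3 + (∑ j, x j * y j) * hδ + (∑ j, x j * y j) * d1 * hal0
    have hga0 : (∑ j, x j * b j) = 0 := by
      rcases mul_eq_zero.mp hkey2 with h | h
      · exact h
      · exact absurd h (ne_of_gt hw)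
    rw [hal0, hga0, hD0]
    norm_num
  · -- nondegenerate case
    have ea := sum_expand x y a ((∑ j, x j ^ 2) * (∑ j, y j ^ 2) - (∑ j, x j * y j) ^ 2)
      (-((∑ j, y j ^ 2) * (∑ j, x j * a j) - (∑ j, x j * y j) * (∑ j, y j * a j)))
      (-((∑ j, x j ^ 2) * (∑ j, y j * a j) - (∑ j, x j * y j) * (∑ j, x j * a j)))
    have eb := sum_expand x y b ((∑ j, x j ^ 2) * (∑ j, y j ^ 2) - (∑ j, x j * y j) ^ 2)
      (-((∑ j, y j ^ 2) * (∑ j, x j * b j) - (∑ j, x j * y j) * (∑ j, y j * b j)))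
      (-((∑ j, x j ^ 2) * (∑ j, y j * b j) - (∑ j, x j * y j) * (∑ j, x j * b j)))
    have hwa : 0 ≤ ∑ j, (((∑ j, x j ^ 2) * (∑ j, y j ^ 2) - (∑ j, x j * y j) ^ 2) * a j
        + (-((∑ j, y j ^ 2) * (∑ j, x j * a j) - (∑ j, x j * y j) * (∑ j, y j * a j))) * x j
        + (-((∑ j, x j ^ 2) * (∑ j, y j * a j) - (∑ j, x j * y j) * (∑ j, x j * a j))) * y j) ^ 2 :=
      Finset.sum_nonneg fun j _ => sq_nonneg _
    have hwb : 0 ≤ ∑ j, (((∑ j, x j ^ 2) * (∑ j, y j ^ 2) - (∑ j, x j * y j) ^ 2) * b j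
        + (-((∑ j, y j ^ 2) * (∑ j, x j * b j) - (∑ j, x j * y j) * (∑ j, y j * b j))) * x j
        + (-((∑ j, x j ^ 2) * (∑ j, y j * b j) - (∑ j, x j * y j) * (∑ j, x j * b j))) * y j) ^ 2 :=
      Finset.sum_nonneg fun j _ => sq_nonneg _
    rw [ea] at hwa
    rw [eb] at hwb
    rw [hβ] at hwa
    rw [hδ] at hwb
    have hT : 0 ≤ ((∑ j, x j ^ 2) * (∑ j, y j ^ 2) - (∑ j, x j * y j) ^ 2) *
        (((∑ j, x j ^ 2) * (∑ j, y j ^ 2) - (∑ j, x j * y j) ^ 2) * ((∑ j, a j ^ 2) + (∑ j, b j ^ 2))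
          - ((∑ j, y j ^ 2) + (∑ j, x j ^ 2) * d1 ^ 2)
              * ((∑ j, x j * a j) ^ 2 + (∑ j, x j * b j) ^ 2)) := by
      linarith [hwa, hwb]
    have hT2 : 0 ≤ ((∑ j, x j ^ 2) * (∑ j, y j ^ 2) - (∑ j, x j * y j) ^ 2) * ((∑ j, a j ^ 2) + (∑ j, b j ^ 2))
          - ((∑ j, y j ^ 2) + (∑ j, x j ^ 2) * d1 ^ 2)
              * ((∑ j, x j * a j) ^ 2 + (∑ j, x j * b j) ^ 2) := by
      nlinarith [hT, hD]
    linarith [hT2]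

lemma est {n : ℕ} {θ : ℝ → ℝ} {V : Set ℝ} (hθ : ContDiffOn ℝ 2 θ V) (hV : IsOpen V)
    {p v : Fin n → ℂ}
    (hsV : (∑ j, (p j).re ^ 2) ∈ V)
    (hspos : 0 < (∑ j, (p j).re ^ 2))
    (hw : 0 < θ (∑ j, (p j).re ^ 2))
    (hyeq : (∑ j, (p j).im ^ 2) = θ (∑ j, (p j).re ^ 2))
    (hd1 : deriv θ (∑ j, (p j).re ^ 2) < 1)
    (hodeP : 2 * (∑ j, (p j).re ^ 2) * θ (∑ j, (p j).re ^ 2) * deriv (deriv θ) (∑ j, (p j).re ^ 2) =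
      (1 - deriv θ (∑ j, (p j).re ^ 2)) * ((∑ j, (p j).re ^ 2) * (deriv θ (∑ j, (p j).re ^ 2)) ^ 2 + θ (∑ j, (p j).re ^ 2)))
    (hv1 : fderiv ℝ (rho n θ) p v = 0)
    (hv2 : fderiv ℝ (rho n θ) p (Complex.I • v) = 0) :
    (1 - deriv θ (∑ j, (p j).re ^ 2)) * ((∑ j, (p j).re * (p j).im) ^ 2 * ((∑ j, (v j).re ^ 2) + (∑ j, (v j).im ^ 2)))
      ≤ 2 * (∑ j, (p j).re ^ 2) * θ (∑ j, (p j).re ^ 2) * leviForm (rho n θ) p v := by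
  rw [tangent_rho hθ hV hsV] at hv1 hv2
  have hre : ∀ j : Fin n, ((Complex.I • v) j).re = -(v j).im := fun j => by
    simp [Pi.smul_apply, smul_eq_mul, Complex.mul_re]
  have him : ∀ j : Fin n, ((Complex.I • v) j).im = (v j).re := fun j => by
    simp [Pi.smul_apply, smul_eq_mul, Complex.mul_im]
  have hIm : ∑ j, (p j).im * ((Complex.I • v) j).im = ∑ j, (p j).im * (v j).re :=
    Finset.sum_congr rfl fun j _ => by rw [him]
  have hRe : ∑ j, (p j).re * ((Complex.I • v) j).re = -∑ j, (p j).re * (v j).im := by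
    rw [← Finset.sum_neg_distrib]
    exact Finset.sum_congr rfl fun j _ => by rw [hre]; ring
  rw [hIm, hRe] at hv2
  have hδ : (∑ j, (p j).im * (v j).im) = deriv θ (∑ j, (p j).re ^ 2) * ∑ j, (p j).re * (v j).re := by linarith
  have hβ : (∑ j, (p j).im * (v j).re) = -(deriv θ (∑ j, (p j).re ^ 2) * ∑ j, (p j).re * (v j).im) := by linarith
  have hwsum : 0 < ∑ j, (p j).im ^ 2 := by rw [hyeq]; exact hw
  have key := key_ineq (fun j => (p j).re) (fun j => (p j).im)
    (fun j => (v j).re) (fun j => (v j).im) (deriv θ (∑ j, (p j).re ^ 2)) hspos hwsum hβ hδ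
  rw [hyeq] at key
  rw [levi_rho hθ hV hsV v]
  have hodeQ : 2 * (∑ j, (p j).re ^ 2) * θ (∑ j, (p j).re ^ 2) * deriv (deriv θ) (∑ j, (p j).re ^ 2) * ((∑ j, (p j).re * (v j).re) ^ 2 + (∑ j, (p j).re * (v j).im) ^ 2)
      = ((1 - deriv θ (∑ j, (p j).re ^ 2)) * ((∑ j, (p j).re ^ 2) * (deriv θ (∑ j, (p j).re ^ 2)) ^ 2 + θ (∑ j, (p j).re ^ 2))) * ((∑ j, (p j).re * (v j).re) ^ 2 + (∑ j, (p j).re * (v j).im) ^ 2) := by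
    rw [hodeP]
  have hbr : 0 ≤ (∑ j, (p j).re ^ 2) * θ (∑ j, (p j).re ^ 2) * ((∑ j, (v j).re ^ 2) + (∑ j, (v j).im ^ 2)) - (θ (∑ j, (p j).re ^ 2) + (∑ j, (p j).re ^ 2) * (deriv θ (∑ j, (p j).re ^ 2)) ^ 2) * ((∑ j, (p j).re * (v j).re) ^ 2 + (∑ j, (p j).re * (v j).im) ^ 2)
      - (∑ j, (p j).re * (p j).im) ^ 2 * ((∑ j, (v j).re ^ 2) + (∑ j, (v j).im ^ 2)) := by linarith [key]
  have hmn := mul_nonneg (sub_nonneg.mpr hd1.le) hbr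
  linarith [hmn, hodeQ]

end LeviAux

open LeviAux in
theorem stmt_2 {n : ℕ} (hn : 1 < n)
    (U : Set (Fin n → ℝ)) (hUne : U.Nonempty) (hUopen : IsOpen U)
    (hUinv : ∀ x x' : Fin n → ℝ, x ∈ U → (∑ j, x' j ^ 2) = (∑ j, x j ^ 2) → x' ∈ U)
    (θ : ℝ → ℝ) (V : Set ℝ) (hV : IsOpen V)
    (hIV : {s : ℝ | ∃ x ∈ U, s = ∑ j, x j ^ 2} ⊆ V)
    (hθ : ContDiffOn ℝ 2 θ V)
    (hθpos : ∀ s ∈ {s : ℝ | ∃ x ∈ U, s = ∑ j, x j ^ 2}, 0 < θ s)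
    (hode : ∀ s ∈ {s : ℝ | ∃ x ∈ U, s = ∑ j, x j ^ 2},
      2 * s * θ s * deriv (deriv θ) s =
        (1 - deriv θ s) * (s * (deriv θ s) ^ 2 + θ s))
    (hθ' : ∀ s ∈ {s : ℝ | ∃ x ∈ U, s = ∑ j, x j ^ 2}, deriv θ s < 1) :
    (∀ p ∈ SigmaSet n U θ, ∀ v ∈ complexTangent (rho n θ) p,
        0 ≤ leviForm (rho n θ) p v) ∧
    (∀ p ∈ SigmaSet n U θ, (∑ j, (p j).re * (p j).im) ≠ 0 →
        ∀ v ∈ complexTangent (rho n θ) p, v ≠ 0 → 0 < leviForm (rho n θ) p v) ∧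
    (∀ p ∈ SigmaSet n U θ, (∑ j, (p j).re * (p j).im) = 0 →
        ∃ v ∈ complexTangent (rho n θ) p, v ≠ 0 ∧ leviForm (rho n θ) p v = 0) := by
  have hmem : ∀ p ∈ SigmaSet n U θ, (∑ j, (p j).re ^ 2) ∈ {s : ℝ | ∃ x ∈ U, s = ∑ j, x j ^ 2} :=
    fun p hp => ⟨fun j => (p j).re, hp.1, rfl⟩
  have hspos : ∀ p ∈ SigmaSet n U θ, 0 < (∑ j, (p j).re ^ 2) := by
    intro p hp
    rcases (Finset.sum_nonneg fun j _ => sq_nonneg ((p j).re)).lt_or_eq with h | h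
    · exact h
    · exfalso
      have h1 := hode _ (hmem p hp)
      have h2 := hθpos _ (hmem p hp)
      have h3 := hθ' _ (hmem p hp)
      rw [← h] at h1 h2 h3
      nlinarith [h1, h2, h3]
  refine ⟨?_, ?_, ?_⟩
  · intro p hp v hv
    have hE := est hθ hV (hIV (hmem p hp)) (hspos p hp) (hθpos _ (hmem p hp)) hp.2
      (hθ' _ (hmem p hp)) (hode _ (hmem p hp)) hv.1 hv.2
    have h1 : 0 < 2 * (∑ j, (p j).re ^ 2) * θ (∑ j, (p j).re ^ 2) :=
      mul_pos (mul_pos two_pos (hspos p hp)) (hθpos _ (hmem p hp))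
    have h2 : 0 ≤ (1 - deriv θ (∑ j, (p j).re ^ 2)) * ((∑ j, (p j).re * (p j).im) ^ 2 * ((∑ j, (v j).re ^ 2) + (∑ j, (v j).im ^ 2))) := by
      have := hθ' _ (hmem p hp)
      have hb : (0:ℝ) ≤ (∑ j, (p j).re * (p j).im) ^ 2 * ((∑ j, (v j).re ^ 2) + (∑ j, (v j).im ^ 2)) := by positivity
      nlinarith [hb]
    nlinarith [hE, h1, h2]
  · intro p hp ht v hv hvne
    have hE := est hθ hV (hIV (hmem p hp)) (hspos p hp) (hθpos _ (hmem p hp)) hp.2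
      (hθ' _ (hmem p hp)) (hode _ (hmem p hp)) hv.1 hv.2
    have h1 : 0 < 2 * (∑ j, (p j).re ^ 2) * θ (∑ j, (p j).re ^ 2) :=
      mul_pos (mul_pos two_pos (hspos p hp)) (hθpos _ (hmem p hp))
    obtain ⟨j, hj⟩ := Function.ne_iff.mp hvne
    have hj2 : v j ≠ 0 := by simpa using hj
    have hj' : (v j).re ≠ 0 ∨ (v j).im ≠ 0 := by
      by_contra hc
      push_neg at hc
      exact hj2 (Complex.ext (by simpa using hc.1) (by simpa using hc.2))
    have hjj : 0 < (v j).re ^ 2 + (v j).im ^ 2 := by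
      rcases hj' with h | h
      · have := lt_of_le_of_ne (sq_nonneg ((v j).re)) (Ne.symm (pow_ne_zero 2 h))
        nlinarith [sq_nonneg ((v j).im)]
      · have := lt_of_le_of_ne (sq_nonneg ((v j).im)) (Ne.symm (pow_ne_zero 2 h))
        nlinarith [sq_nonneg ((v j).re)]
    have hA : (v j).re ^ 2 ≤ ∑ i, (v i).re ^ 2 :=
      Finset.single_le_sum (f := fun i => (v i).re ^ 2) (fun i _ => sq_nonneg _)
        (Finset.mem_univ j)
    have hB : (v j).im ^ 2 ≤ ∑ i, (v i).im ^ 2 :=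
      Finset.single_le_sum (f := fun i => (v i).im ^ 2) (fun i _ => sq_nonneg _)
        (Finset.mem_univ j)
    have hABpos : 0 < (∑ j, (v j).re ^ 2) + (∑ j, (v j).im ^ 2) := by linarith
    have htpos : 0 < (∑ j, (p j).re * (p j).im) ^ 2 := lt_of_le_of_ne (sq_nonneg _) (Ne.symm (pow_ne_zero 2 ht))
    have h2 : 0 < (1 - deriv θ (∑ j, (p j).re ^ 2)) * ((∑ j, (p j).re * (p j).im) ^ 2 * ((∑ j, (v j).re ^ 2) + (∑ j, (v j).im ^ 2))) := by
      have := hθ' _ (hmem p hp)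
      have hb : (0:ℝ) < (∑ j, (p j).re * (p j).im) ^ 2 * ((∑ j, (v j).re ^ 2) + (∑ j, (v j).im ^ 2)) :=
        mul_pos htpos hABpos
      nlinarith [hb]
    nlinarith [hE, h1, h2]
  · intro p hp ht
    have hsV := hIV (hmem p hp)
    have hsp := hspos p hp
    have hw := hθpos _ (hmem p hp)
    have hodeP := hode _ (hmem p hp)
    have hpy := hp.2
    have hcim : ∀ j : Fin n, (p j).im * (((fun k => ((θ (∑ j, (p j).re ^ 2) * (p k).re + (-(deriv θ (∑ j, (p j).re ^ 2) * (∑ j, (p j).re ^ 2))) * (p k).im : ℝ) : ℂ) + ((θ (∑ j, (p j).re ^ 2) * (p k).re + (deriv θ (∑ j, (p j).re ^ 2) * (∑ j, (p j).re ^ 2)) * (p k).im : ℝ) : ℂ) * Complex.I)) j).im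
        = θ (∑ j, (p j).re ^ 2) * ((p j).re * (p j).im) + (deriv θ (∑ j, (p j).re ^ 2) * (∑ j, (p j).re ^ 2)) * ((p j).im ^ 2) := fun j => by
      simp only [Complex.add_re, Complex.add_im, Complex.ofReal_re, Complex.ofReal_im, Complex.mul_re, Complex.mul_im, Complex.I_re, Complex.I_im, Pi.smul_apply, smul_eq_mul, mul_zero, mul_one, zero_mul, one_mul, sub_zero, zero_sub, add_zero, zero_add, neg_zero, neg_neg]; ring
    have hcre : ∀ j : Fin n, (p j).re * (((fun k => ((θ (∑ j, (p j).re ^ 2) * (p k).re + (-(deriv θ (∑ j, (p j).re ^ 2) * (∑ j, (p j).re ^ 2))) * (p k).im : ℝ) : ℂ) + ((θ (∑ j, (p j).re ^ 2) * (p k).re + (deriv θ (∑ j, (p j).re ^ 2) * (∑ j, (p j).re ^ 2)) * (p k).im : ℝ) : ℂ) * Complex.I)) j).re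
        = θ (∑ j, (p j).re ^ 2) * ((p j).re ^ 2) + (-(deriv θ (∑ j, (p j).re ^ 2) * (∑ j, (p j).re ^ 2))) * ((p j).re * (p j).im) := fun j => by
      simp only [Complex.add_re, Complex.add_im, Complex.ofReal_re, Complex.ofReal_im, Complex.mul_re, Complex.mul_im, Complex.I_re, Complex.I_im, Pi.smul_apply, smul_eq_mul, mul_zero, mul_one, zero_mul, one_mul, sub_zero, zero_sub, add_zero, zero_add, neg_zero, neg_neg]; ring
    have hcim2 : ∀ j : Fin n, (p j).im * ((Complex.I • ((fun k => ((θ (∑ j, (p j).re ^ 2) * (p k).re + (-(deriv θ (∑ j, (p j).re ^ 2) * (∑ j, (p j).re ^ 2))) * (p k).im : ℝ) : ℂ) + ((θ (∑ j, (p j).re ^ 2) * (p k).re + (deriv θ (∑ j, (p j).re ^ 2) * (∑ j, (p j).re ^ 2)) * (p k).im : ℝ) : ℂ) * Complex.I))) j).im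
        = θ (∑ j, (p j).re ^ 2) * ((p j).re * (p j).im) + (-(deriv θ (∑ j, (p j).re ^ 2) * (∑ j, (p j).re ^ 2))) * ((p j).im ^ 2) := fun j => by
      simp only [Complex.add_re, Complex.add_im, Complex.ofReal_re, Complex.ofReal_im, Complex.mul_re, Complex.mul_im, Complex.I_re, Complex.I_im, Pi.smul_apply, smul_eq_mul, mul_zero, mul_one, zero_mul, one_mul, sub_zero, zero_sub, add_zero, zero_add, neg_zero, neg_neg]; ring
    have hcre2 : ∀ j : Fin n, (p j).re * ((Complex.I • ((fun k => ((θ (∑ j, (p j).re ^ 2) * (p k).re + (-(deriv θ (∑ j, (p j).re ^ 2) * (∑ j, (p j).re ^ 2))) * (p k).im : ℝ) : ℂ) + ((θ (∑ j, (p j).re ^ 2) * (p k).re + (deriv θ (∑ j, (p j).re ^ 2) * (∑ j, (p j).re ^ 2)) * (p k).im : ℝ) : ℂ) * Complex.I))) j).re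
        = (-(θ (∑ j, (p j).re ^ 2))) * ((p j).re ^ 2) + (-((deriv θ (∑ j, (p j).re ^ 2) * (∑ j, (p j).re ^ 2)))) * ((p j).re * (p j).im) := fun j => by
      simp only [Complex.add_re, Complex.add_im, Complex.ofReal_re, Complex.ofReal_im, Complex.mul_re, Complex.mul_im, Complex.I_re, Complex.I_im, Pi.smul_apply, smul_eq_mul, mul_zero, mul_one, zero_mul, one_mul, sub_zero, zero_sub, add_zero, zero_add, neg_zero, neg_neg]; ring
    have hsq1 : ∀ j : Fin n, (((fun k => ((θ (∑ j, (p j).re ^ 2) * (p k).re + (-(deriv θ (∑ j, (p j).re ^ 2) * (∑ j, (p j).re ^ 2))) * (p k).im : ℝ) : ℂ) + ((θ (∑ j, (p j).re ^ 2) * (p k).re + (deriv θ (∑ j, (p j).re ^ 2) * (∑ j, (p j).re ^ 2)) * (p k).im : ℝ) : ℂ) * Complex.I)) j).re ^ 2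
        = θ (∑ j, (p j).re ^ 2) ^ 2 * ((p j).re ^ 2) + (-(deriv θ (∑ j, (p j).re ^ 2) * (∑ j, (p j).re ^ 2))) ^ 2 * ((p j).im ^ 2)
          + (2 * θ (∑ j, (p j).re ^ 2) * (-(deriv θ (∑ j, (p j).re ^ 2) * (∑ j, (p j).re ^ 2)))) * ((p j).re * (p j).im) := fun j => by
      simp only [Complex.add_re, Complex.add_im, Complex.ofReal_re, Complex.ofReal_im, Complex.mul_re, Complex.mul_im, Complex.I_re, Complex.I_im, Pi.smul_apply, smul_eq_mul, mul_zero, mul_one, zero_mul, one_mul, sub_zero, zero_sub, add_zero, zero_add, neg_zero, neg_neg]; ring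
    have hsq2 : ∀ j : Fin n, (((fun k => ((θ (∑ j, (p j).re ^ 2) * (p k).re + (-(deriv θ (∑ j, (p j).re ^ 2) * (∑ j, (p j).re ^ 2))) * (p k).im : ℝ) : ℂ) + ((θ (∑ j, (p j).re ^ 2) * (p k).re + (deriv θ (∑ j, (p j).re ^ 2) * (∑ j, (p j).re ^ 2)) * (p k).im : ℝ) : ℂ) * Complex.I)) j).im ^ 2
        = θ (∑ j, (p j).re ^ 2) ^ 2 * ((p j).re ^ 2) + (deriv θ (∑ j, (p j).re ^ 2) * (∑ j, (p j).re ^ 2)) ^ 2 * ((p j).im ^ 2)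
          + (2 * θ (∑ j, (p j).re ^ 2) * (deriv θ (∑ j, (p j).re ^ 2) * (∑ j, (p j).re ^ 2))) * ((p j).re * (p j).im) := fun j => by
      simp only [Complex.add_re, Complex.add_im, Complex.ofReal_re, Complex.ofReal_im, Complex.mul_re, Complex.mul_im, Complex.I_re, Complex.I_im, Pi.smul_apply, smul_eq_mul, mul_zero, mul_one, zero_mul, one_mul, sub_zero, zero_sub, add_zero, zero_add, neg_zero, neg_neg]; ring
    have hvim : ∀ j : Fin n, (p j).re * (((fun k => ((θ (∑ j, (p j).re ^ 2) * (p k).re + (-(deriv θ (∑ j, (p j).re ^ 2) * (∑ j, (p j).re ^ 2))) * (p k).im : ℝ) : ℂ) + ((θ (∑ j, (p j).re ^ 2) * (p k).re + (deriv θ (∑ j, (p j).re ^ 2) * (∑ j, (p j).re ^ 2)) * (p k).im : ℝ) : ℂ) * Complex.I)) j).im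
        = θ (∑ j, (p j).re ^ 2) * ((p j).re ^ 2) + (deriv θ (∑ j, (p j).re ^ 2) * (∑ j, (p j).re ^ 2)) * ((p j).re * (p j).im) := fun j => by
      simp only [Complex.add_re, Complex.add_im, Complex.ofReal_re, Complex.ofReal_im, Complex.mul_re, Complex.mul_im, Complex.I_re, Complex.I_im, Pi.smul_apply, smul_eq_mul, mul_zero, mul_one, zero_mul, one_mul, sub_zero, zero_sub, add_zero, zero_add, neg_zero, neg_neg]; ring
    refine ⟨(fun k => ((θ (∑ j, (p j).re ^ 2) * (p k).re + (-(deriv θ (∑ j, (p j).re ^ 2) * (∑ j, (p j).re ^ 2))) * (p k).im : ℝ) : ℂ) + ((θ (∑ j, (p j).re ^ 2) * (p k).re + (deriv θ (∑ j, (p j).re ^ 2) * (∑ j, (p j).re ^ 2)) * (p k).im : ℝ) : ℂ) * Complex.I), ⟨?_, ?_⟩, ?_, ?_⟩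
    · rw [tangent_rho hθ hV hsV]
      simp_rw [hcim, hcre, Finset.sum_add_distrib, ← Finset.mul_sum]
      rw [hpy, ht]
      ring
    · rw [tangent_rho hθ hV hsV]
      simp_rw [hcim2, hcre2, Finset.sum_add_distrib, ← Finset.mul_sum]
      rw [hpy, ht]
      ring
    · intro h0
      have hval : ∑ j, (p j).re * (((fun k => ((θ (∑ j, (p j).re ^ 2) * (p k).re + (-(deriv θ (∑ j, (p j).re ^ 2) * (∑ j, (p j).re ^ 2))) * (p k).im : ℝ) : ℂ) + ((θ (∑ j, (p j).re ^ 2) * (p k).re + (deriv θ (∑ j, (p j).re ^ 2) * (∑ j, (p j).re ^ 2)) * (p k).im : ℝ) : ℂ) * Complex.I)) j).re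
          = θ (∑ j, (p j).re ^ 2) * (∑ j, (p j).re ^ 2) + (-(deriv θ (∑ j, (p j).re ^ 2) * (∑ j, (p j).re ^ 2))) * (∑ j, (p j).re * (p j).im) := by
        simp_rw [hcre, Finset.sum_add_distrib, ← Finset.mul_sum]
      rw [h0] at hval
      simp only [Pi.zero_apply, Complex.zero_re, mul_zero, Finset.sum_const_zero] at hval
      rw [ht, mul_zero, add_zero] at hval
      nlinarith [hsp, hw, hval]
    · rw [levi_rho hθ hV hsV]
      simp_rw [hsq1, hsq2, hcre, hvim, Finset.sum_add_distrib, ← Finset.mul_sum]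
      rw [hpy, ht]
      linear_combination (-(θ (∑ j, (p j).re ^ 2) * (∑ j, (p j).re ^ 2))) * hodeP
end

section
/- Let n > 1 and let θ be a C² function with positive values defined near a point s₀ = x₁² ≥ 0, and set ρ(x+iy) = |y|² − θ(|x|²). Let p = (x₁ + i y₁, i y₂, 0, …, 0) ∈ ℂⁿ with y₁² + y₂² = θ(x₁²). For λ ∈ ℂ and v'' = (v₃,…,vₙ) ∈ ℂ^{n−2}, put v = (−i λ y₂, λ (x₁ θ'(x₁²) + i y₁), v₃, …, vₙ) ∈ ℂⁿ. Then ∑_{k=1}^n (∂ρ/∂z_k)(p) v_k = 0 (so v ∈ T_p^ℂΣ), every element of T_p^ℂΣ has this form, and 2 L_ρ(p;v) = |λ|² ( −2 x₁² y₂² θ''(x₁²) + (1 − θ'(x₁²)) (x₁² θ'(x₁²)² + θ(x₁²)) ) + (1 − θ'(x₁²)) |v''|². -/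
open Complex Set

namespace Stmt4Aux

variable {n : ℕ}

noncomputable def reL (j : Fin n) : (Fin n → ℂ) →L[ℝ] ℝ :=
  Complex.reCLM.comp (ContinuousLinearMap.proj j)
noncomputable def imL (j : Fin n) : (Fin n → ℂ) →L[ℝ] ℝ :=
  Complex.imCLM.comp (ContinuousLinearMap.proj j)

@[simp] lemma reL_apply (j : Fin n) (z : Fin n → ℂ) : reL j z = (z j).re := rfl
@[simp] lemma imL_apply (j : Fin n) (z : Fin n → ℂ) : imL j z = (z j).im := rfl

noncomputable def BD : (Fin n → ℂ) →L[ℝ] ((Fin n → ℂ) →L[ℝ] ℝ) :=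
  ∑ j, (((2:ℝ) • reL j).smulRight (reL j))
noncomputable def AD : (Fin n → ℂ) →L[ℝ] ((Fin n → ℂ) →L[ℝ] ℝ) :=
  ∑ j, (((2:ℝ) • imL j).smulRight (imL j))

@[simp] lemma BD_apply (z w : Fin n → ℂ) : BD z w = ∑ j, 2 * (z j).re * (w j).re := by
  simp [BD, ContinuousLinearMap.sum_apply, mul_assoc]

@[simp] lemma AD_apply (z w : Fin n → ℂ) : AD z w = ∑ j, 2 * (z j).im * (w j).im := by
  simp [AD, ContinuousLinearMap.sum_apply, mul_assoc]

lemma hasFDerivAt_Bsum (z : Fin n → ℂ) :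
    HasFDerivAt (fun z : Fin n → ℂ => ∑ j, (z j).re ^ 2) (BD z) z := by
  have h : ∀ j : Fin n, HasFDerivAt (fun z : Fin n → ℂ => (z j).re ^ 2)
      ((2 * (z j).re) • reL j) z := by
    intro j
    have h2 := ((reL j).hasFDerivAt (x := z)).mul ((reL j).hasFDerivAt (x := z))
    have h3 : HasFDerivAt (fun z : Fin n → ℂ => (z j).re ^ 2)
        ((z j).re • reL j + (z j).re • reL j) z := by
      have e : (fun z : Fin n → ℂ => (z j).re ^ 2) = ⇑(reL j) * ⇑(reL j) := by ext w; simp [sq]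
      rw [e]; exact h2
    convert h3 using 1
    ext w; simp; ring
  have hs := HasFDerivAt.fun_sum (fun j (_ : j ∈ Finset.univ) => h j)
  exact hs.congr_fderiv (by ext w; simp [BD, ContinuousLinearMap.sum_apply, mul_assoc])

lemma hasFDerivAt_Asum (z : Fin n → ℂ) :
    HasFDerivAt (fun z : Fin n → ℂ => ∑ j, (z j).im ^ 2) (AD z) z := by
  have h : ∀ j : Fin n, HasFDerivAt (fun z : Fin n → ℂ => (z j).im ^ 2)
      ((2 * (z j).im) • imL j) z := by
    intro j
    have h2 := ((imL j).hasFDerivAt (x := z)).mul ((imL j).hasFDerivAt (x := z))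
    have h3 : HasFDerivAt (fun z : Fin n → ℂ => (z j).im ^ 2)
        ((z j).im • imL j + (z j).im • imL j) z := by
      have e : (fun z : Fin n → ℂ => (z j).im ^ 2) = ⇑(imL j) * ⇑(imL j) := by ext w; simp [sq]
      rw [e]; exact h2
    convert h3 using 1
    ext w; simp; ring
  have hs := HasFDerivAt.fun_sum (fun j (_ : j ∈ Finset.univ) => h j)
  exact hs.congr_fderiv (by ext w; simp [AD, ContinuousLinearMap.sum_apply, mul_assoc])

variable {θ : ℝ → ℝ} {V : Set ℝ}

lemma hasFDerivAt_rho (hV : IsOpen V) (hθ : ContDiffOn ℝ 2 θ V) (z : Fin n → ℂ)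
    (hz : (∑ j, (z j).re ^ 2) ∈ V) :
    HasFDerivAt (rho n θ) (AD z - deriv θ (∑ j, (z j).re ^ 2) • BD z) z := by
  have hθd : HasDerivAt θ (deriv θ (∑ j, (z j).re ^ 2)) (∑ j, (z j).re ^ 2) := by
    have : DifferentiableAt ℝ θ (∑ j, (z j).re ^ 2) :=
      (hθ.differentiableOn (by norm_num) _ hz).differentiableAt (hV.mem_nhds hz)
    exact this.hasDerivAt
  have hcomp := hθd.comp_hasFDerivAt z (hasFDerivAt_Bsum z)
  exact (hasFDerivAt_Asum z).sub hcomp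

lemma deriv_theta_contDiffOn (hV : IsOpen V) (hθ : ContDiffOn ℝ 2 θ V) :
    ContDiffOn ℝ 1 (deriv θ) V := by
  have h2 : (2 : WithTop ℕ∞) = 1 + 1 := by norm_num
  rw [h2] at hθ
  exact ((contDiffOn_succ_iff_deriv_of_isOpen hV).1 hθ).2.2

lemma hasFDerivAt_g (hV : IsOpen V) (hθ : ContDiffOn ℝ 2 θ V) (z : Fin n → ℂ)
    (hz : (∑ j, (z j).re ^ 2) ∈ V) :
    HasFDerivAt (fun z : Fin n → ℂ => AD z - deriv θ (∑ j, (z j).re ^ 2) • BD z)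
      (AD - (deriv θ (∑ j, (z j).re ^ 2) • BD
        + ((deriv (deriv θ) (∑ j, (z j).re ^ 2)) • (BD z)).smulRight (BD z))) z := by
  have hθ'd : HasDerivAt (deriv θ) (deriv (deriv θ) (∑ j, (z j).re ^ 2))
      (∑ j, (z j).re ^ 2) := by
    have : DifferentiableAt ℝ (deriv θ) (∑ j, (z j).re ^ 2) :=
      ((deriv_theta_contDiffOn hV hθ).differentiableOn (by norm_num) _ hz).differentiableAt
        (hV.mem_nhds hz)
    exact this.hasDerivAt
  have hc : HasFDerivAt (fun z : Fin n → ℂ => deriv θ (∑ j, (z j).re ^ 2))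
      ((deriv (deriv θ) (∑ j, (z j).re ^ 2)) • (BD z)) z :=
    (hθ'd.comp_hasFDerivAt z (hasFDerivAt_Bsum z) :)
  exact (AD.hasFDerivAt (x := z)).sub (hc.smul (BD.hasFDerivAt (x := z)))

lemma fderiv_fderiv_rho (hV : IsOpen V) (hθ : ContDiffOn ℝ 2 θ V) (z₀ : Fin n → ℂ)
    (hz₀ : (∑ j, (z₀ j).re ^ 2) ∈ V) :
    fderiv ℝ (fderiv ℝ (rho n θ)) z₀ =
      AD - (deriv θ (∑ j, (z₀ j).re ^ 2) • BD
        + ((deriv (deriv θ) (∑ j, (z₀ j).re ^ 2)) • (BD z₀)).smulRight (BD z₀)) := by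
  have hBcont : Continuous (fun z : Fin n → ℂ => ∑ j, (z j).re ^ 2) := by
    exact continuous_finset_sum _ fun j _ =>
      (Complex.continuous_re.comp (continuous_apply j)).pow 2
  have hmem : (fun z : Fin n → ℂ => ∑ j, (z j).re ^ 2) ⁻¹' V ∈ nhds z₀ :=
    (hV.preimage hBcont).mem_nhds hz₀
  have heq : fderiv ℝ (rho n θ) =ᶠ[nhds z₀]
      fun z => AD z - deriv θ (∑ j, (z j).re ^ 2) • BD z :=
    Filter.eventually_of_mem hmem fun z hz => (hasFDerivAt_rho hV hθ z hz).fderiv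
  rw [heq.fderiv_eq]
  exact (hasFDerivAt_g hV hθ z₀ hz₀).fderiv

lemma sum_split (hn : 1 < n) (f : Fin n → ℝ) :
    ∑ j, f j = f ⟨0, by omega⟩ + f ⟨1, by omega⟩ +
      ∑ j ∈ Finset.univ.filter (fun j : Fin n => 2 ≤ (j : ℕ)), f j := by
  classical
  have h := Finset.sum_filter_add_sum_filter_not Finset.univ (fun j : Fin n => 2 ≤ (j:ℕ)) f
  have h2 : Finset.univ.filter (fun j : Fin n => ¬ 2 ≤ (j:ℕ)) =
      ({⟨0, by omega⟩, ⟨1, by omega⟩} : Finset (Fin n)) := by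
    ext j
    simp only [Finset.mem_filter, Finset.mem_univ, true_and, Finset.mem_insert,
      Finset.mem_singleton, Fin.ext_iff]
    omega
  rw [← h, h2, Finset.sum_pair (Fin.ne_of_val_ne (by norm_num))]
  ring

lemma norm_sq_complex (z : ℂ) : ‖z‖ ^ 2 = z.re ^ 2 + z.im ^ 2 := by
  rw [Complex.sq_norm, Complex.normSq_apply]; ring

end Stmt4Aux

open Stmt4Aux in
theorem stmt_4 {n : ℕ} (hn : 1 < n)
    (x₁ y₁ y₂ : ℝ) (hx₁ : 0 ≤ x₁)
    (θ : ℝ → ℝ) (V : Set ℝ) (hV : IsOpen V) (hs₀ : x₁ ^ 2 ∈ V)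
    (hθ : ContDiffOn ℝ 2 θ V) (hθpos : ∀ s ∈ V, 0 < θ s)
    (hcirc : y₁ ^ 2 + y₂ ^ 2 = θ (x₁ ^ 2))
    (p : Fin n → ℂ)
    (hp : p = fun j : Fin n => if (j : ℕ) = 0 then (x₁ : ℂ) + y₁ * Complex.I
      else if (j : ℕ) = 1 then (y₂ : ℂ) * Complex.I else 0) :
    -- every vector of the indicated form lies in `T_p^ℂΣ` and its Levi form is given
    -- by the stated formula
    (∀ (lam : ℂ) (v : Fin n → ℂ),
      (∀ j : Fin n, (j : ℕ) = 0 → v j = -(Complex.I * lam * y₂)) →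
      (∀ j : Fin n, (j : ℕ) = 1 →
        v j = lam * ((x₁ : ℂ) * (deriv θ (x₁ ^ 2) : ℝ) + Complex.I * y₁)) →
      v ∈ complexTangent (rho n θ) p ∧
      2 * leviForm (rho n θ) p v =
        ‖lam‖ ^ 2 * (-(2 * x₁ ^ 2 * y₂ ^ 2 * deriv (deriv θ) (x₁ ^ 2))
            + (1 - deriv θ (x₁ ^ 2)) * (x₁ ^ 2 * (deriv θ (x₁ ^ 2)) ^ 2 + θ (x₁ ^ 2)))
          + (1 - deriv θ (x₁ ^ 2)) *
            ∑ j ∈ Finset.univ.filter (fun j : Fin n => 2 ≤ (j : ℕ)), ‖v j‖ ^ 2) ∧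
    -- and every element of `T_p^ℂΣ` has this form
    (∀ v ∈ complexTangent (rho n θ) p, ∃ lam : ℂ,
      (∀ j : Fin n, (j : ℕ) = 0 → v j = -(Complex.I * lam * y₂)) ∧
      (∀ j : Fin n, (j : ℕ) = 1 →
        v j = lam * ((x₁ : ℂ) * (deriv θ (x₁ ^ 2) : ℝ) + Complex.I * y₁))) := by
  classical
  set j0 : Fin n := ⟨0, by omega⟩ with hj0def
  set j1 : Fin n := ⟨1, by omega⟩ with hj1def
  set t' : ℝ := deriv θ (x₁ ^ 2) with ht'
  set t'' : ℝ := deriv (deriv θ) (x₁ ^ 2) with ht''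
  have hpj0 : p j0 = (x₁ : ℂ) + y₁ * Complex.I := by rw [hp]; simp [hj0def]
  have hpj1 : p j1 = (y₂ : ℂ) * Complex.I := by rw [hp]; norm_num [hj1def]
  have hptail : ∀ j : Fin n, 2 ≤ (j : ℕ) → p j = 0 := by
    intro j hj; rw [hp]; simp only
    rw [if_neg (by omega), if_neg (by omega)]
  have hpj0re : (p j0).re = x₁ := by rw [hpj0]; simp
  have hpj0im : (p j0).im = y₁ := by rw [hpj0]; simp
  have hpj1re : (p j1).re = 0 := by rw [hpj1]; simp
  have hpj1im : (p j1).im = y₂ := by rw [hpj1]; simp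
  have hBp : (∑ j, (p j).re ^ 2) = x₁ ^ 2 := by
    rw [sum_split hn (fun j => (p j).re ^ 2)]
    rw [show ((⟨0, by omega⟩ : Fin n)) = j0 from rfl, show ((⟨1, by omega⟩ : Fin n)) = j1 from rfl]
    rw [hpj0re, hpj1re, Finset.sum_eq_zero]
    · ring
    · intro j hj
      rw [hptail j (Finset.mem_filter.1 hj).2]
      simp
  have hs₀' : (∑ j, (p j).re ^ 2) ∈ V := by rw [hBp]; exact hs₀
  -- the first derivative at p
  have hfd : fderiv ℝ (rho n θ) p = AD p - t' • BD p := by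
    have := (hasFDerivAt_rho hV hθ p hs₀').fderiv
    rw [hBp] at this
    exact this
  -- evaluations of AD p and BD p
  have hADp : ∀ w : Fin n → ℂ, AD p w = 2 * y₁ * (w j0).im + 2 * y₂ * (w j1).im := by
    intro w
    rw [AD_apply, sum_split hn]
    rw [show ((⟨0, by omega⟩ : Fin n)) = j0 from rfl, show ((⟨1, by omega⟩ : Fin n)) = j1 from rfl]
    rw [hpj0im, hpj1im, Finset.sum_eq_zero]
    · ring
    · intro j hj
      rw [hptail j (Finset.mem_filter.1 hj).2]
      simp
  have hBDp : ∀ w : Fin n → ℂ, BD p w = 2 * x₁ * (w j0).re := by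
    intro w
    rw [BD_apply, sum_split hn]
    rw [show ((⟨0, by omega⟩ : Fin n)) = j0 from rfl, show ((⟨1, by omega⟩ : Fin n)) = j1 from rfl]
    rw [hpj0re, hpj1re, Finset.sum_eq_zero]
    · ring
    · intro j hj
      rw [hptail j (Finset.mem_filter.1 hj).2]
      simp
  have hIm : ∀ (w : Fin n → ℂ) (j : Fin n), ((Complex.I • w) j).im = (w j).re := by
    intro w j; simp
  have hRe : ∀ (w : Fin n → ℂ) (j : Fin n), ((Complex.I • w) j).re = -(w j).im := by
    intro w j; simp
  -- second derivative
  have h2nd : fderiv ℝ (fderiv ℝ (rho n θ)) p =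
      AD - (t' • BD + (t'' • (BD p)).smulRight (BD p)) := by
    have := fderiv_fderiv_rho hV hθ p hs₀'
    rw [hBp] at this
    exact this
  have hGapp : ∀ w u : Fin n → ℂ,
      fderiv ℝ (fderiv ℝ (rho n θ)) p w u
        = AD w u - t' * BD w u - (t'' * BD p w) * BD p u := by
    intro w u
    rw [h2nd]
    simp only [ContinuousLinearMap.sub_apply, ContinuousLinearMap.add_apply,
      ContinuousLinearMap.smul_apply, ContinuousLinearMap.smulRight_apply, smul_eq_mul]
    ring
  constructor
  · -- forward direction
    intro lam v hv0 hv1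
    have hvj0 : v j0 = -(Complex.I * lam * y₂) := hv0 j0 rfl
    have hvj1 : v j1 = lam * ((x₁ : ℂ) * (t' : ℝ) + Complex.I * y₁) := hv1 j1 rfl
    have hv0re : (v j0).re = lam.im * y₂ := by
      rw [hvj0]
      simp only [Complex.neg_re, Complex.mul_re, Complex.mul_im, Complex.I_re, Complex.I_im,
        Complex.ofReal_re, Complex.ofReal_im]
      ring
    have hv0im : (v j0).im = -(lam.re * y₂) := by
      rw [hvj0]
      simp only [Complex.neg_im, Complex.mul_re, Complex.mul_im, Complex.I_re, Complex.I_im,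
        Complex.ofReal_re, Complex.ofReal_im]
      ring
    have hv1re : (v j1).re = lam.re * (x₁ * t') - lam.im * y₁ := by
      rw [hvj1]
      simp only [Complex.mul_re, Complex.mul_im, Complex.add_re, Complex.add_im, Complex.I_re,
        Complex.I_im, Complex.ofReal_re, Complex.ofReal_im]
      ring
    have hv1im : (v j1).im = lam.im * (x₁ * t') + lam.re * y₁ := by
      rw [hvj1]
      simp only [Complex.mul_re, Complex.mul_im, Complex.add_re, Complex.add_im, Complex.I_re,
        Complex.I_im, Complex.ofReal_re, Complex.ofReal_im]
      ring
    constructor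
    · -- tangency
      constructor
      · rw [hfd]
        simp only [ContinuousLinearMap.sub_apply, ContinuousLinearMap.smul_apply, smul_eq_mul]
        rw [hADp, hBDp, hv0re, hv0im, hv1im]
        ring
      · rw [hfd]
        simp only [ContinuousLinearMap.sub_apply, ContinuousLinearMap.smul_apply, smul_eq_mul]
        rw [hADp, hBDp, hIm, hIm, hRe, hv0re, hv0im, hv1re]
        ring
    · -- Levi form
      have hIt : ∀ w : Fin n → ℂ, iteratedFDeriv ℝ 2 (rho n θ) p ![w, w]
          = AD w w - t' * BD w w - (t'' * BD p w) * BD p w := by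
        intro w
        rw [iteratedFDeriv_two_apply]
        simp only [Matrix.cons_val_zero, Matrix.cons_val_one, Matrix.head_cons]
        rw [hGapp]
      set S : ℝ := ∑ j, ‖v j‖ ^ 2 with hS
      set T : ℝ := ∑ j ∈ Finset.univ.filter (fun j : Fin n => 2 ≤ (j : ℕ)), ‖v j‖ ^ 2 with hT
      have hA2 : AD v v + AD (Complex.I • v) (Complex.I • v) = 2 * S := by
        rw [AD_apply, AD_apply, ← Finset.sum_add_distrib, hS, Finset.mul_sum]
        refine Finset.sum_congr rfl fun j _ => ?_
        rw [hIm, norm_sq_complex]; ring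
      have hB2 : BD v v + BD (Complex.I • v) (Complex.I • v) = 2 * S := by
        rw [BD_apply, BD_apply, ← Finset.sum_add_distrib, hS, Finset.mul_sum]
        refine Finset.sum_congr rfl fun j _ => ?_
        rw [hRe, norm_sq_complex]; ring
      have hBDpv : BD p v = 2 * x₁ * (lam.im * y₂) := by rw [hBDp, hv0re]
      have hBDpIv : BD p (Complex.I • v) = 2 * x₁ * (lam.re * y₂) := by
        rw [hBDp, hRe, hv0im]; ring
      have key : iteratedFDeriv ℝ 2 (rho n θ) p ![v, v]
          + iteratedFDeriv ℝ 2 (rho n θ) p ![Complex.I • v, Complex.I • v]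
          = 2 * S - t' * (2 * S) - t'' * (4 * x₁ ^ 2 * y₂ ^ 2 * (lam.re ^ 2 + lam.im ^ 2)) := by
        rw [hIt v, hIt (Complex.I • v), hBDpv, hBDpIv]
        linear_combination hA2 - t' * hB2
      have hlev : 2 * leviForm (rho n θ) p v
          = (iteratedFDeriv ℝ 2 (rho n θ) p ![v, v]
            + iteratedFDeriv ℝ 2 (rho n θ) p ![Complex.I • v, Complex.I • v]) / 2 := by
        rw [show leviForm (rho n θ) p v = (iteratedFDeriv ℝ 2 (rho n θ) p ![v, v]
          + iteratedFDeriv ℝ 2 (rho n θ) p ![Complex.I • v, Complex.I • v]) / 4 from rfl]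
        ring
      have hSsplit : S = ‖v j0‖ ^ 2 + ‖v j1‖ ^ 2 + T := by
        rw [hS, hT, sum_split hn (fun j => ‖v j‖ ^ 2)]
      have hnv0 : ‖v j0‖ ^ 2 = (lam.re ^ 2 + lam.im ^ 2) * y₂ ^ 2 := by
        rw [norm_sq_complex, hv0re, hv0im]; ring
      have hnv1 : ‖v j1‖ ^ 2 = (lam.re ^ 2 + lam.im ^ 2) * ((x₁ * t') ^ 2 + y₁ ^ 2) := by
        rw [norm_sq_complex, hv1re, hv1im]; ring
      have hnlam : ‖lam‖ ^ 2 = lam.re ^ 2 + lam.im ^ 2 := norm_sq_complex lam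
      rw [hlev, key, hSsplit, hnv0, hnv1, hnlam, ← hcirc]
      ring
  · -- converse direction
    intro v hv
    obtain ⟨h1, h2⟩ := hv
    rw [hfd] at h1 h2
    simp only [ContinuousLinearMap.sub_apply, ContinuousLinearMap.smul_apply,
      smul_eq_mul] at h1 h2
    rw [hADp, hBDp] at h1
    rw [hADp, hBDp, hIm, hIm, hRe] at h2
    -- h1 : 2y₁ (v j0).im + 2y₂ (v j1).im - t' (2x₁ (v j0).re) = 0
    -- h2 : 2y₁ (v j0).re + 2y₂ (v j1).re - t' (2x₁ (-(v j0).im)) = 0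
    have hjeq0 : ∀ j : Fin n, (j : ℕ) = 0 → j = j0 := by
      intro j hj; exact Fin.ext (by simpa using hj)
    have hjeq1 : ∀ j : Fin n, (j : ℕ) = 1 → j = j1 := by
      intro j hj; exact Fin.ext (by simpa using hj)
    by_cases hy2 : y₂ = 0
    · -- then y₁ ≠ 0 and v j0 = 0
      have hθp : 0 < θ (x₁ ^ 2) := hθpos _ hs₀
      have hy1 : y₁ ≠ 0 := by
        intro h; rw [h, hy2] at hcirc; norm_num at hcirc; linarith
      have him0 : (v j0).im = 0 := by
        have key : (2 * y₁ ^ 2 + 2 * (t' * x₁) ^ 2) * (v j0).im = 0 := by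
          rw [hy2] at h1 h2
          linear_combination y₁ * h1 + (t' * x₁) * h2
        have hpos : 0 < 2 * y₁ ^ 2 + 2 * (t' * x₁) ^ 2 := by positivity
        exact by
          have := mul_eq_zero.1 key
          rcases this with h | h
          · exact absurd h (ne_of_gt hpos)
          · exact h
      have hre0 : (v j0).re = 0 := by
        rw [hy2, him0] at h2
        have : 2 * y₁ * (v j0).re = 0 := by linarith
        have := mul_eq_zero.1 this
        rcases this with h | h
        · exact absurd h (by intro h'; apply hy1; linarith)
        · exact h
      have hv00 : v j0 = 0 := Complex.ext hre0 him0
      have hw : ((x₁ : ℂ) * (t' : ℝ) + Complex.I * y₁) ≠ 0 := by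
        intro h
        have := congrArg Complex.im h
        simp at this
        exact hy1 this
      refine ⟨v j1 / ((x₁ : ℂ) * (t' : ℝ) + Complex.I * y₁), ?_, ?_⟩
      · intro j hj
        rw [hjeq0 j hj, hv00, hy2]
        simp
      · intro j hj
        rw [hjeq1 j hj, div_mul_cancel₀ _ hw]
    · -- y₂ ≠ 0
      set lam : ℂ := Complex.I * v j0 / (y₂ : ℂ) with hlam
      have hy2c : (y₂ : ℂ) ≠ 0 := by exact_mod_cast hy2
      refine ⟨lam, ?_, ?_⟩
      · intro j hj
        rw [hjeq0 j hj, hlam]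
        have hI : -(Complex.I * (Complex.I * v j0 / (y₂ : ℂ)) * (y₂ : ℂ)) = v j0 := by
          rw [show Complex.I * (Complex.I * v j0 / (y₂ : ℂ)) * (y₂ : ℂ)
              = (Complex.I * Complex.I) * v j0 * ((y₂ : ℂ) / (y₂ : ℂ)) from by ring,
            div_self hy2c, Complex.I_mul_I]
          ring
        exact hI.symm
      · intro j hj
        rw [hjeq1 j hj, hlam]
        have key : (y₂ : ℂ) * v j1 = (Complex.I * v j0) * ((x₁ : ℂ) * (t' : ℝ) + Complex.I * y₁) := by
          apply Complex.ext
          · simp only [Complex.mul_re, Complex.mul_im, Complex.add_re, Complex.add_im,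
              Complex.I_re, Complex.I_im, Complex.ofReal_re, Complex.ofReal_im]
            linear_combination h2 / 2
          · simp only [Complex.mul_re, Complex.mul_im, Complex.add_re, Complex.add_im,
              Complex.I_re, Complex.I_im, Complex.ofReal_re, Complex.ofReal_im]
            linear_combination h1 / 2
        rw [div_mul_eq_mul_div, eq_div_iff hy2c]
        linear_combination key
end
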